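/- arXiv:2210.07238 — 2 statements merged into one kernel-verified Lean document; each statement's English description precedes it below -/
import Mathlib

section
/- \sum_{k=1}^\infty H_{k-1}^{(2)} / (k^2 binom(2k,k)) = \pi^4 / 1944. -/
open Real Set

noncomputable def aa (k : ℕ) : ℝ := 1 / ((k : ℝ) ^ 2 * (Nat.centralBinom k : ℝ))

noncomputable def hh (k : ℕ) : ℝ := ∑ j ∈ Finset.Icc 1 k, (1 : ℝ) / (j : ℝ) ^ 2

noncomputable def bb (k : ℕ) : ℝ := 3 / 2 * hh (k - 1) * aa k

lemma centralBinom_cast_pos (k : ℕ) : (0 : ℝ) < (Nat.centralBinom k : ℝ) := by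
  exact_mod_cast Nat.centralBinom_pos k

lemma aa_pos (k : ℕ) : 0 < aa (k + 1) := by
  have h1 : (0:ℝ) < ((k + 1 : ℕ) : ℝ) := by exact_mod_cast Nat.succ_pos k
  exact div_pos one_pos (mul_pos (by positivity) (centralBinom_cast_pos _))

lemma hh_zero : hh 0 = 0 := by simp [hh]

lemma hh_succ (k : ℕ) : hh (k + 1) = hh k + 1 / ((k : ℝ) + 1) ^ 2 := by
  unfold hh
  rw [Finset.sum_Icc_succ_top (by omega : 1 ≤ k + 1)]
  push_cast
  ring

lemma hh_nonneg (k : ℕ) : 0 ≤ hh k :=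
  Finset.sum_nonneg fun j _ => by positivity

lemma hh_succ_le (k : ℕ) : hh (k + 1) ≤ 2 - 1 / ((k : ℝ) + 1) := by
  induction k with
  | zero => rw [hh_succ, hh_zero]; norm_num
  | succ n ih =>
    rw [hh_succ]
    have h1 : (0:ℝ) < (n:ℝ) + 1 := by positivity
    have h2 : (0:ℝ) < (n:ℝ) + 2 := by positivity
    have key : 1 / ((n:ℝ) + 2) ^ 2 + 1 / ((n:ℝ) + 2) ≤ 1 / ((n:ℝ) + 1) := by
      rw [div_add_div _ _ (by positivity) (by positivity), div_le_div_iff₀ (by positivity) h1]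
      nlinarith
    have e : ((n:ℝ)+1+1) = (n:ℝ)+2 := by ring
    push_cast
    rw [e]
    linarith [ih, key]

lemma hh_le_two (k : ℕ) : hh k ≤ 2 := by
  cases k with
  | zero => rw [hh_zero]; norm_num
  | succ n =>
    have h := hh_succ_le n
    have h1 : (0:ℝ) < 1 / ((n:ℝ) + 1) := by positivity
    linarith

lemma bb_succ (k : ℕ) : bb (k + 1) = 3 / 2 * hh k * aa (k + 1) := by
  simp [bb]

lemma bb_nonneg (k : ℕ) : 0 ≤ bb (k + 1) := by
  rw [bb_succ]
  have := hh_nonneg k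
  have := (aa_pos k).le
  positivity

lemma bb_le (k : ℕ) : bb (k + 1) ≤ 3 * aa (k + 1) := by
  rw [bb_succ]
  have h1 := hh_le_two k
  have h2 := (aa_pos k).le
  nlinarith [hh_nonneg k]
lemma rec_a (k : ℕ) :
    (2 * (k : ℝ) + 4) * (2 * (k : ℝ) + 3) * aa (k + 2) = ((k : ℝ) + 1) ^ 2 * aa (k + 1) := by
  have h := Nat.succ_mul_centralBinom_succ (k + 1)
  have h' := congrArg (fun n : ℕ => (n : ℝ)) h
  push_cast at h'
  have hC1 := centralBinom_cast_pos (k + 1)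
  have hC2 := centralBinom_cast_pos (k + 2)
  have e : ((k:ℕ) + 1 + 1) = k + 2 := rfl
  rw [e] at h'
  unfold aa
  push_cast
  field_simp
  linear_combination (-((k:ℝ)+2)) * h'

lemma rec_b (k : ℕ) :
    (2 * (k : ℝ) + 4) * (2 * (k : ℝ) + 3) * bb (k + 2) =
      ((k : ℝ) + 1) ^ 2 * bb (k + 1) + 3 / 2 * aa (k + 1) := by
  have h := rec_a k
  have hk : (0:ℝ) < ((k:ℝ) + 1) ^ 2 := by positivity
  rw [show k + 2 = (k + 1) + 1 from rfl] at h ⊢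
  rw [bb_succ, bb_succ, hh_succ]
  field_simp
  linear_combination (hh k * ((k:ℝ)+1)^2 + 1) * h
lemma aa_le (k : ℕ) : aa (k + 1) ≤ (1 / 4 : ℝ) ^ k / (2 * ((k : ℝ) + 1)) := by
  have h := Nat.four_pow_le_two_mul_self_mul_centralBinom (k + 1) (Nat.succ_pos k)
  have h' : (4 : ℝ) ^ (k + 1) ≤ 2 * ((k : ℝ) + 1) * (Nat.centralBinom (k + 1) : ℝ) := by
    exact_mod_cast h
  have hC := centralBinom_cast_pos (k + 1)
  have h4 : (0:ℝ) < 4 ^ k := by positivity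
  unfold aa
  push_cast
  rw [div_le_div_iff₀ (by positivity) (by positivity)]
  have e : (1/4 : ℝ) ^ k * 4 ^ k = 1 := by rw [← mul_pow]; norm_num
  have hp : (0:ℝ) ≤ (1/4:ℝ)^k := by positivity
  have key : (4:ℝ) ≤ 2 * ((k:ℝ) + 1) * (Nat.centralBinom (k+1) : ℝ) * (1/4)^k := by
    have h2 := mul_le_mul_of_nonneg_right h' hp
    have e4 : (4:ℝ)^(k+1) * (1/4)^k = 4 := by rw [pow_succ]; linear_combination 4 * e
    linarith [h2, e4.symm.le, e4.le]
  nlinarith [mul_le_mul_of_nonneg_left key (show (0:ℝ) ≤ ((k:ℝ)+1)/2 by positivity)]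

noncomputable def U (k : ℕ) : ℝ := 28 * (((k : ℝ) + 1) * (9 / 16) ^ k)

lemma summable_U : Summable U := by
  have h1 : Summable (fun k : ℕ => (k : ℝ) * (9 / 16) ^ k) := by
    simpa using summable_pow_mul_geometric_of_norm_lt_one 1 (r := (9/16 : ℝ)) (by
      rw [Real.norm_eq_abs, abs_of_nonneg (by norm_num : (0:ℝ) ≤ 9/16)]; norm_num)
  have h2 : Summable (fun k : ℕ => (9 / 16 : ℝ) ^ k) :=
    _root_.summable_geometric_of_lt_one (by norm_num) (by norm_num)
  exact ((h1.add h2).mul_left 28).congr (fun k => by simp [U]; ring)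

lemma coef_bound {k m : ℕ} {c co x : ℝ} (hc0 : 0 ≤ c) (hc : c ≤ 3 * aa (k + 1))
    (hm : m ≤ 2 * k + 2) (hco0 : 0 ≤ co) (hco : co ≤ (2 * (k : ℝ) + 2) * (2 * (k : ℝ) + 1))
    (hx : |x| ≤ 3 / 2) : ‖co * c * x ^ m‖ ≤ U k := by
  have haa := aa_pos k
  have h1 : ‖co * c * x ^ m‖ = co * c * |x| ^ m := by
    rw [Real.norm_eq_abs, abs_mul, abs_mul, abs_pow, abs_of_nonneg hco0, abs_of_nonneg hc0]
  rw [h1]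
  have h2 : |x| ^ m ≤ (3/2 : ℝ) ^ m := pow_le_pow_left₀ (abs_nonneg x) hx m
  have h3 : (3/2 : ℝ) ^ m ≤ (3/2 : ℝ) ^ (2 * k + 2) := pow_le_pow_right₀ (by norm_num) hm
  have h4 : co * c * |x| ^ m ≤ ((2 * (k:ℝ) + 2) * (2 * (k:ℝ) + 1)) * (3 * aa (k+1)) * (3/2) ^ (2*k+2) := by
    have hxm : (0:ℝ) ≤ |x| ^ m := by positivity
    have : co * c * |x| ^ m ≤ co * c * (3/2) ^ (2*k+2) := by
      apply mul_le_mul_of_nonneg_left (le_trans h2 h3) (by positivity)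
    refine le_trans this ?_
    have hp : (0:ℝ) ≤ (3/2:ℝ) ^ (2*k+2) := by positivity
    nlinarith [mul_le_mul hco hc hc0 (by positivity : (0:ℝ) ≤ (2*(k:ℝ)+2)*(2*(k:ℝ)+1))]
  refine le_trans h4 ?_
  have h5 : ((3:ℝ)/2) ^ (2*k+2) = (9/4) * (9/4) ^ k := by
    rw [pow_add, pow_mul]; norm_num; ring
  have h6 := aa_le k
  have h7 : ((2 * (k:ℝ) + 2) * (2 * (k:ℝ) + 1)) * (3 * aa (k+1)) * (3/2) ^ (2*k+2)
      ≤ ((2 * (k:ℝ) + 2) * (2 * (k:ℝ) + 1)) * (3 * ((1/4:ℝ)^k / (2 * ((k:ℝ)+1)))) * ((9/4) * (9/4) ^ k) := by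
    rw [h5]
    have : (0:ℝ) ≤ (9/4) * (9/4:ℝ) ^ k := by positivity
    apply mul_le_mul_of_nonneg_right _ this
    apply mul_le_mul_of_nonneg_left _ (by positivity)
    linarith [h6]
  refine le_trans h7 ?_
  have hk1 : (0:ℝ) < (k:ℝ) + 1 := by positivity
  have e2 : ((2 * (k:ℝ) + 2) * (2 * (k:ℝ) + 1)) * (3 * ((1/4:ℝ)^k / (2 * ((k:ℝ)+1)))) * ((9/4) * (9/4) ^ k)
      = (27/4) * (2 * (k:ℝ) + 1) * ((1/4 * (9/4) : ℝ)) ^ k := by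
    have hk1 : (0:ℝ) < (k:ℝ) + 1 := by positivity
    rw [mul_pow]
    field_simp
    ring
  rw [e2]
  unfold U
  have e3 : ((1/4 : ℝ) * (9/4)) = 9/16 := by norm_num
  rw [e3]
  have hp : (0:ℝ) ≤ (9/16:ℝ) ^ k := by positivity
  nlinarith [hp]
noncomputable def fA (k : ℕ) (x : ℝ) : ℝ := aa (k + 1) * x ^ (2 * k + 2)
noncomputable def fA1 (k : ℕ) (x : ℝ) : ℝ := (2 * (k : ℝ) + 2) * aa (k + 1) * x ^ (2 * k + 1)
noncomputable def fA2 (k : ℕ) (x : ℝ) : ℝ :=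
  (2 * (k : ℝ) + 2) * (2 * (k : ℝ) + 1) * aa (k + 1) * x ^ (2 * k)
noncomputable def fB (k : ℕ) (x : ℝ) : ℝ := bb (k + 1) * x ^ (2 * k + 2)
noncomputable def fB1 (k : ℕ) (x : ℝ) : ℝ := (2 * (k : ℝ) + 2) * bb (k + 1) * x ^ (2 * k + 1)
noncomputable def fB2 (k : ℕ) (x : ℝ) : ℝ :=
  (2 * (k : ℝ) + 2) * (2 * (k : ℝ) + 1) * bb (k + 1) * x ^ (2 * k)

noncomputable def A (x : ℝ) : ℝ := ∑' k, fA k x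
noncomputable def A1 (x : ℝ) : ℝ := ∑' k, fA1 k x
noncomputable def A2 (x : ℝ) : ℝ := ∑' k, fA2 k x
noncomputable def B (x : ℝ) : ℝ := ∑' k, fB k x
noncomputable def B1 (x : ℝ) : ℝ := ∑' k, fB1 k x
noncomputable def B2 (x : ℝ) : ℝ := ∑' k, fB2 k x

lemma bound_fA (k : ℕ) {x : ℝ} (hx : |x| ≤ 3 / 2) : ‖fA k x‖ ≤ U k := by
  have h : fA k x = 1 * aa (k + 1) * x ^ (2 * k + 2) := by rw [fA]; ring
  rw [h]
  exact coef_bound (aa_pos k).le (by nlinarith [aa_pos k]) le_rfl zero_le_one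
    (by nlinarith [Nat.cast_nonneg (α := ℝ) k]) hx

lemma bound_fA1 (k : ℕ) {x : ℝ} (hx : |x| ≤ 3 / 2) : ‖fA1 k x‖ ≤ U k := by
  rw [fA1]
  exact coef_bound (aa_pos k).le (by nlinarith [aa_pos k]) (by omega)
    (by positivity) (by nlinarith [Nat.cast_nonneg (α := ℝ) k]) hx

lemma bound_fA2 (k : ℕ) {x : ℝ} (hx : |x| ≤ 3 / 2) : ‖fA2 k x‖ ≤ U k := by
  rw [fA2]
  exact coef_bound (aa_pos k).le (by nlinarith [aa_pos k]) (by omega)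
    (by positivity) le_rfl hx

lemma bound_fB (k : ℕ) {x : ℝ} (hx : |x| ≤ 3 / 2) : ‖fB k x‖ ≤ U k := by
  have h : fB k x = 1 * bb (k + 1) * x ^ (2 * k + 2) := by rw [fB]; ring
  rw [h]
  exact coef_bound (bb_nonneg k) (bb_le k) le_rfl zero_le_one
    (by nlinarith [Nat.cast_nonneg (α := ℝ) k]) hx

lemma bound_fB1 (k : ℕ) {x : ℝ} (hx : |x| ≤ 3 / 2) : ‖fB1 k x‖ ≤ U k := by
  rw [fB1]
  exact coef_bound (bb_nonneg k) (bb_le k) (by omega)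
    (by positivity) (by nlinarith [Nat.cast_nonneg (α := ℝ) k]) hx

lemma bound_fB2 (k : ℕ) {x : ℝ} (hx : |x| ≤ 3 / 2) : ‖fB2 k x‖ ≤ U k := by
  rw [fB2]
  exact coef_bound (bb_nonneg k) (bb_le k) (by omega) (by positivity) le_rfl hx
lemma hasDerivAt_fA (k : ℕ) (y : ℝ) : HasDerivAt (fA k) (fA1 k y) y := by
  have h := (hasDerivAt_pow (2 * k + 2) y).const_mul (aa (k + 1))
  have e : (fun x : ℝ => aa (k + 1) * x ^ (2 * k + 2)) = fA k := by
    funext x; rw [fA]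
  rw [e] at h
  refine h.congr_deriv ?_
  rw [fA1]
  push_cast
  ring_nf

lemma hasDerivAt_fA1 (k : ℕ) (y : ℝ) : HasDerivAt (fA1 k) (fA2 k y) y := by
  have h := (hasDerivAt_pow (2 * k + 1) y).const_mul ((2 * (k : ℝ) + 2) * aa (k + 1))
  have e : (fun x : ℝ => (2 * (k : ℝ) + 2) * aa (k + 1) * x ^ (2 * k + 1)) = fA1 k := by
    funext x; rw [fA1]
  rw [e] at h
  refine h.congr_deriv ?_
  rw [fA2]
  push_cast
  ring_nf

lemma hasDerivAt_fB (k : ℕ) (y : ℝ) : HasDerivAt (fB k) (fB1 k y) y := by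
  have h := (hasDerivAt_pow (2 * k + 2) y).const_mul (bb (k + 1))
  have e : (fun x : ℝ => bb (k + 1) * x ^ (2 * k + 2)) = fB k := by
    funext x; rw [fB]
  rw [e] at h
  refine h.congr_deriv ?_
  rw [fB1]
  push_cast
  ring_nf

lemma hasDerivAt_fB1 (k : ℕ) (y : ℝ) : HasDerivAt (fB1 k) (fB2 k y) y := by
  have h := (hasDerivAt_pow (2 * k + 1) y).const_mul ((2 * (k : ℝ) + 2) * bb (k + 1))
  have e : (fun x : ℝ => (2 * (k : ℝ) + 2) * bb (k + 1) * x ^ (2 * k + 1)) = fB1 k := by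
    funext x; rw [fB1]
  rw [e] at h
  refine h.congr_deriv ?_
  rw [fB2]
  push_cast
  ring_nf

lemma fA_zero (k : ℕ) : fA k 0 = 0 := by
  rw [fA, zero_pow (by omega : 2 * k + 2 ≠ 0), mul_zero]

lemma fA1_zero (k : ℕ) : fA1 k 0 = 0 := by
  rw [fA1, zero_pow (by omega : 2 * k + 1 ≠ 0), mul_zero]

lemma fB_zero (k : ℕ) : fB k 0 = 0 := by
  rw [fB, zero_pow (by omega : 2 * k + 2 ≠ 0), mul_zero]

lemma fB1_zero (k : ℕ) : fB1 k 0 = 0 := by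
  rw [fB1, zero_pow (by omega : 2 * k + 1 ≠ 0), mul_zero]

lemma summable_fA {x : ℝ} (hx : |x| ≤ 3 / 2) : Summable (fun k => fA k x) :=
  Summable.of_norm_bounded summable_U fun k => bound_fA k hx

lemma summable_fA1 {x : ℝ} (hx : |x| ≤ 3 / 2) : Summable (fun k => fA1 k x) :=
  Summable.of_norm_bounded summable_U fun k => bound_fA1 k hx

lemma summable_fA2 {x : ℝ} (hx : |x| ≤ 3 / 2) : Summable (fun k => fA2 k x) :=
  Summable.of_norm_bounded summable_U fun k => bound_fA2 k hx

lemma summable_fB {x : ℝ} (hx : |x| ≤ 3 / 2) : Summable (fun k => fB k x) :=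
  Summable.of_norm_bounded summable_U fun k => bound_fB k hx

lemma summable_fB1 {x : ℝ} (hx : |x| ≤ 3 / 2) : Summable (fun k => fB1 k x) :=
  Summable.of_norm_bounded summable_U fun k => bound_fB1 k hx

lemma summable_fB2 {x : ℝ} (hx : |x| ≤ 3 / 2) : Summable (fun k => fB2 k x) :=
  Summable.of_norm_bounded summable_U fun k => bound_fB2 k hx

lemma mem_abs {x : ℝ} (hx : x ∈ Ioo (-(3/2) : ℝ) (3/2)) : |x| ≤ 3 / 2 := by
  rw [abs_le]; exact ⟨hx.1.le, hx.2.le⟩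

lemma hasDerivAt_A {x : ℝ} (hx : x ∈ Ioo (-(3/2) : ℝ) (3/2)) : HasDerivAt A (A1 x) x := by
  apply hasDerivAt_tsum_of_isPreconnected (y₀ := (0:ℝ)) summable_U isOpen_Ioo
    (convex_Ioo _ _).isPreconnected (fun k y _ => hasDerivAt_fA k y)
    (fun k y hy => bound_fA1 k (mem_abs hy)) _ _ hx
  · exact ⟨by norm_num, by norm_num⟩
  · exact (summable_fA (x := 0) (by norm_num)).congr fun k => rfl

lemma hasDerivAt_A1 {x : ℝ} (hx : x ∈ Ioo (-(3/2) : ℝ) (3/2)) : HasDerivAt A1 (A2 x) x := by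
  apply hasDerivAt_tsum_of_isPreconnected (y₀ := (0:ℝ)) summable_U isOpen_Ioo
    (convex_Ioo _ _).isPreconnected (fun k y _ => hasDerivAt_fA1 k y)
    (fun k y hy => bound_fA2 k (mem_abs hy)) _ _ hx
  · exact ⟨by norm_num, by norm_num⟩
  · exact (summable_fA1 (x := 0) (by norm_num)).congr fun k => rfl

lemma hasDerivAt_B {x : ℝ} (hx : x ∈ Ioo (-(3/2) : ℝ) (3/2)) : HasDerivAt B (B1 x) x := by
  apply hasDerivAt_tsum_of_isPreconnected (y₀ := (0:ℝ)) summable_U isOpen_Ioo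
    (convex_Ioo _ _).isPreconnected (fun k y _ => hasDerivAt_fB k y)
    (fun k y hy => bound_fB1 k (mem_abs hy)) _ _ hx
  · exact ⟨by norm_num, by norm_num⟩
  · exact (summable_fB (x := 0) (by norm_num)).congr fun k => rfl

lemma hasDerivAt_B1 {x : ℝ} (hx : x ∈ Ioo (-(3/2) : ℝ) (3/2)) : HasDerivAt B1 (B2 x) x := by
  apply hasDerivAt_tsum_of_isPreconnected (y₀ := (0:ℝ)) summable_U isOpen_Ioo
    (convex_Ioo _ _).isPreconnected (fun k y _ => hasDerivAt_fB1 k y)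
    (fun k y hy => bound_fB2 k (mem_abs hy)) _ _ hx
  · exact ⟨by norm_num, by norm_num⟩
  · exact (summable_fB1 (x := 0) (by norm_num)).congr fun k => rfl

lemma A_zero : A 0 = 0 := by
  unfold A
  rw [tsum_congr fA_zero]
  exact tsum_zero

lemma A1_zero : A1 0 = 0 := by
  unfold A1
  rw [tsum_congr fA1_zero]
  exact tsum_zero

lemma B_zero : B 0 = 0 := by
  unfold B
  rw [tsum_congr fB_zero]
  exact tsum_zero

lemma B1_zero : B1 0 = 0 := by
  unfold B1
  rw [tsum_congr fB1_zero]
  exact tsum_zero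
lemma fA2_zero_val (x : ℝ) : fA2 0 x = 1 := by
  rw [fA2, aa]
  simp [Nat.centralBinom]

lemma ode1 {x : ℝ} (hx : |x| ≤ 3 / 2) : (4 - x ^ 2) * A2 x - x * A1 x = 4 := by
  have sA1 := summable_fA1 hx
  have sA2 := summable_fA2 hx
  have sA2' : Summable (fun k => fA2 (k + 1) x) := by
    rw [← summable_nat_add_iff 1] at sA2
    exact sA2
  have h1 : (4 - x ^ 2) * A2 x - x * A1 x = 4 * A2 x - (x ^ 2 * A2 x + x * A1 x) := by ring
  rw [h1]
  have h2 : 4 * A2 x = 4 + ∑' k, 4 * fA2 (k + 1) x := by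
    unfold A2
    rw [← tsum_mul_left, Summable.tsum_eq_zero_add (sA2.mul_left 4)]
    congr 1
    rw [fA2_zero_val]; norm_num
  have h3 : x ^ 2 * A2 x + x * A1 x = ∑' k, (x ^ 2 * fA2 k x + x * fA1 k x) := by
    unfold A1 A2
    rw [Summable.tsum_add (sA2.mul_left _) (sA1.mul_left _), tsum_mul_left, tsum_mul_left]
  rw [h2, h3]
  have h4 : ∑' k, (x ^ 2 * fA2 k x + x * fA1 k x) = ∑' k, 4 * fA2 (k + 1) x := by
    apply tsum_congr
    intro k
    simp only [fA1, fA2]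
    have h := rec_a k
    rw [show k + 2 = k + 1 + 1 from rfl] at h
    push_cast
    linear_combination (-4) * x ^ (2 * k + 2) * h
  rw [h4]
  ring

lemma fB2_zero_val (x : ℝ) : fB2 0 x = 0 := by
  rw [fB2, bb]
  simp [hh]

lemma ode2 {x : ℝ} (hx : |x| ≤ 3 / 2) : (4 - x ^ 2) * B2 x - x * B1 x = 6 * A x := by
  have sB1 := summable_fB1 hx
  have sB2 := summable_fB2 hx
  have sB2' : Summable (fun k => fB2 (k + 1) x) := by
    rw [← summable_nat_add_iff 1] at sB2
    exact sB2
  have h1 : (4 - x ^ 2) * B2 x - x * B1 x = 4 * B2 x - (x ^ 2 * B2 x + x * B1 x) := by ring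
  rw [h1]
  have h2 : 4 * B2 x = ∑' k, 4 * fB2 (k + 1) x := by
    unfold B2
    rw [← tsum_mul_left, Summable.tsum_eq_zero_add (sB2.mul_left 4)]
    rw [fB2_zero_val]; norm_num
  have h3 : x ^ 2 * B2 x + x * B1 x = ∑' k, (x ^ 2 * fB2 k x + x * fB1 k x) := by
    unfold B1 B2
    rw [Summable.tsum_add (sB2.mul_left _) (sB1.mul_left _), tsum_mul_left, tsum_mul_left]
  rw [h2, h3]
  have h4 : ∑' k, 4 * fB2 (k + 1) x - ∑' k, (x ^ 2 * fB2 k x + x * fB1 k x)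
      = ∑' k, 6 * fA k x := by
    rw [← Summable.tsum_sub (sB2'.mul_left 4) ((sB2.mul_left _).add (sB1.mul_left _))]
    apply tsum_congr
    intro k
    simp only [fA, fB1, fB2]
    have h := rec_b k
    rw [show k + 2 = k + 1 + 1 from rfl] at h
    push_cast
    linear_combination 4 * x ^ (2 * k + 2) * h
  rw [h4, tsum_mul_left]
  rfl
lemma u_pos {x : ℝ} (hx : x ∈ Ioo (-(3/2) : ℝ) (3/2)) : 0 < 4 - x ^ 2 := by
  obtain ⟨h1, h2⟩ := hx
  nlinarith

noncomputable def phi (x : ℝ) : ℝ := Real.arcsin (x / 2)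

lemma phi_zero : phi 0 = 0 := by simp [phi]

lemma hasDerivAt_phi {x : ℝ} (hx : x ∈ Ioo (-(3/2) : ℝ) (3/2)) :
    HasDerivAt phi (1 / Real.sqrt (4 - x ^ 2)) x := by
  obtain ⟨h1, h2⟩ := hx
  have ha : x / 2 ≠ -1 := by intro he; linarith
  have hb : x / 2 ≠ 1 := by intro he; linarith
  have harc := Real.hasDerivAt_arcsin ha hb
  have hdiv : HasDerivAt (fun y : ℝ => y / 2) (1 / 2) x := (hasDerivAt_id x).div_const 2
  have h := HasDerivAt.comp x harc hdiv
  have h' : HasDerivAt phi (1 / Real.sqrt (1 - (x / 2) ^ 2) * (1 / 2)) x := h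
  have e : Real.sqrt (1 - (x / 2) ^ 2) = Real.sqrt (4 - x ^ 2) / 2 := by
    rw [show (1 : ℝ) - (x / 2) ^ 2 = (4 - x ^ 2) * (1 / 2) ^ 2 by ring]
    rw [Real.sqrt_mul (by nlinarith : (0:ℝ) ≤ 4 - x ^ 2),
      Real.sqrt_sq (by norm_num : (0:ℝ) ≤ 1 / 2)]
    ring
  have hs : 0 < Real.sqrt (4 - x ^ 2) := Real.sqrt_pos.mpr (by nlinarith)
  convert h' using 1
  rw [e]
  field_simp

lemma hasDerivAt_sqrtu {x : ℝ} (hx : x ∈ Ioo (-(3/2) : ℝ) (3/2)) :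
    HasDerivAt (fun y : ℝ => Real.sqrt (4 - y ^ 2)) (-x / Real.sqrt (4 - x ^ 2)) x := by
  have hu := u_pos hx
  have hinner : HasDerivAt (fun y : ℝ => 4 - y ^ 2) (-(2 * x)) x := by
    have := (hasDerivAt_pow 2 x).const_sub 4
    simpa using this
  have h := (Real.hasDerivAt_sqrt hu.ne').comp x hinner
  have hs : 0 < Real.sqrt (4 - x ^ 2) := Real.sqrt_pos.mpr hu
  refine h.congr_deriv ?_
  field_simp
lemma icc_sub {y : ℝ} (hy : y ∈ Icc (0:ℝ) 1) : y ∈ Ioo (-(3/2) : ℝ) (3/2) :=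
  ⟨by linarith [hy.1], by linarith [hy.2]⟩

lemma A1_sqrt_eq {x : ℝ} (hx : x ∈ Icc (0:ℝ) 1) :
    A1 x * Real.sqrt (4 - x ^ 2) - 4 * phi x = 0 := by
  have hderiv : ∀ y ∈ Ioo (-(3/2) : ℝ) (3/2),
      HasDerivAt (fun z => A1 z * Real.sqrt (4 - z ^ 2) - 4 * phi z)
        ((A2 y * Real.sqrt (4 - y ^ 2) + A1 y * (-y / Real.sqrt (4 - y ^ 2)))
          - 4 * (1 / Real.sqrt (4 - y ^ 2))) y :=
    fun y hy => ((hasDerivAt_A1 hy).mul (hasDerivAt_sqrtu hy)).sub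
      ((hasDerivAt_phi hy).const_mul 4)
  have hzero : ∀ y ∈ Ioo (-(3/2) : ℝ) (3/2),
      (A2 y * Real.sqrt (4 - y ^ 2) + A1 y * (-y / Real.sqrt (4 - y ^ 2)))
        - 4 * (1 / Real.sqrt (4 - y ^ 2)) = 0 := by
    intro y hy
    have hu := u_pos hy
    have hs : 0 < Real.sqrt (4 - y ^ 2) := Real.sqrt_pos.mpr hu
    have hsq : Real.sqrt (4 - y ^ 2) ^ 2 = 4 - y ^ 2 := Real.sq_sqrt hu.le
    have h := ode1 (mem_abs hy)
    field_simp
    linear_combination h + A2 y * hsq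
  have hcont : ContinuousOn (fun z => A1 z * Real.sqrt (4 - z ^ 2) - 4 * phi z) (Icc 0 1) :=
    fun y hy => ((hderiv y (icc_sub hy)).continuousAt).continuousWithinAt
  have hconst := constant_of_has_deriv_right_zero hcont (fun y hy => by
    have h := hderiv y (icc_sub (Ico_subset_Icc_self hy))
    rw [hzero y (icc_sub (Ico_subset_Icc_self hy))] at h
    exact h.hasDerivWithinAt) x hx
  have h0 : A1 (0:ℝ) * Real.sqrt (4 - (0:ℝ) ^ 2) - 4 * phi 0 = 0 := by
    rw [A1_zero, phi_zero]; ring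
  exact hconst.trans h0

lemma A_eq {x : ℝ} (hx : x ∈ Icc (0:ℝ) 1) : A x = 2 * phi x ^ 2 := by
  have hderiv : ∀ y ∈ Ioo (-(3/2) : ℝ) (3/2),
      HasDerivAt (fun z => A z - 2 * phi z ^ 2)
        (A1 y - 2 * ((2:ℕ) * phi y ^ (2-1) * (1 / Real.sqrt (4 - y ^ 2)))) y :=
    fun y hy => (hasDerivAt_A hy).sub (((hasDerivAt_phi hy).pow 2).const_mul 2)
  have hzero : ∀ y ∈ Icc (0:ℝ) 1,
      A1 y - 2 * ((2:ℕ) * phi y ^ (2-1) * (1 / Real.sqrt (4 - y ^ 2))) = 0 := by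
    intro y hy
    have hu := u_pos (icc_sub hy)
    have hs : 0 < Real.sqrt (4 - y ^ 2) := Real.sqrt_pos.mpr hu
    have h := A1_sqrt_eq hy
    push_cast
    field_simp
    linear_combination h
  have hcont : ContinuousOn (fun z => A z - 2 * phi z ^ 2) (Icc 0 1) :=
    fun y hy => ((hderiv y (icc_sub hy)).continuousAt).continuousWithinAt
  have hconst := constant_of_has_deriv_right_zero hcont (fun y hy => by
    have h := hderiv y (icc_sub (Ico_subset_Icc_self hy))
    rw [hzero y (Ico_subset_Icc_self hy)] at h
    exact h.hasDerivWithinAt) x hx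
  have h0 : A (0:ℝ) - 2 * phi 0 ^ 2 = 0 := by rw [A_zero, phi_zero]; ring
  have := hconst.trans h0
  linarith [this]
lemma B1_sqrt_eq {x : ℝ} (hx : x ∈ Icc (0:ℝ) 1) :
    B1 x * Real.sqrt (4 - x ^ 2) - 4 * phi x ^ 3 = 0 := by
  have hderiv : ∀ y ∈ Ioo (-(3/2) : ℝ) (3/2),
      HasDerivAt (fun z => B1 z * Real.sqrt (4 - z ^ 2) - 4 * phi z ^ 3)
        ((B2 y * Real.sqrt (4 - y ^ 2) + B1 y * (-y / Real.sqrt (4 - y ^ 2)))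
          - 4 * ((3:ℕ) * phi y ^ (3-1) * (1 / Real.sqrt (4 - y ^ 2)))) y :=
    fun y hy => ((hasDerivAt_B1 hy).mul (hasDerivAt_sqrtu hy)).sub
      (((hasDerivAt_phi hy).pow 3).const_mul 4)
  have hzero : ∀ y ∈ Icc (0:ℝ) 1,
      (B2 y * Real.sqrt (4 - y ^ 2) + B1 y * (-y / Real.sqrt (4 - y ^ 2)))
        - 4 * ((3:ℕ) * phi y ^ (3-1) * (1 / Real.sqrt (4 - y ^ 2))) = 0 := by
    intro y hy
    have hu := u_pos (icc_sub hy)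
    have hs : 0 < Real.sqrt (4 - y ^ 2) := Real.sqrt_pos.mpr hu
    have hsq : Real.sqrt (4 - y ^ 2) ^ 2 = 4 - y ^ 2 := Real.sq_sqrt hu.le
    have h := ode2 (mem_abs (icc_sub hy))
    have hA := A_eq hy
    push_cast
    field_simp
    linear_combination h + B2 y * hsq + 6 * hA
  have hcont : ContinuousOn (fun z => B1 z * Real.sqrt (4 - z ^ 2) - 4 * phi z ^ 3) (Icc 0 1) :=
    fun y hy => ((hderiv y (icc_sub hy)).continuousAt).continuousWithinAt
  have hconst := constant_of_has_deriv_right_zero hcont (fun y hy => by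
    have h := hderiv y (icc_sub (Ico_subset_Icc_self hy))
    rw [hzero y (Ico_subset_Icc_self hy)] at h
    exact h.hasDerivWithinAt) x hx
  have h0 : B1 (0:ℝ) * Real.sqrt (4 - (0:ℝ) ^ 2) - 4 * phi 0 ^ 3 = 0 := by
    rw [B1_zero, phi_zero]; ring
  exact hconst.trans h0

lemma B_eq {x : ℝ} (hx : x ∈ Icc (0:ℝ) 1) : B x = phi x ^ 4 := by
  have hderiv : ∀ y ∈ Ioo (-(3/2) : ℝ) (3/2),
      HasDerivAt (fun z => B z - phi z ^ 4)
        (B1 y - (4:ℕ) * phi y ^ (4-1) * (1 / Real.sqrt (4 - y ^ 2))) y :=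
    fun y hy => (hasDerivAt_B hy).sub ((hasDerivAt_phi hy).pow 4)
  have hzero : ∀ y ∈ Icc (0:ℝ) 1,
      B1 y - (4:ℕ) * phi y ^ (4-1) * (1 / Real.sqrt (4 - y ^ 2)) = 0 := by
    intro y hy
    have hu := u_pos (icc_sub hy)
    have hs : 0 < Real.sqrt (4 - y ^ 2) := Real.sqrt_pos.mpr hu
    have h := B1_sqrt_eq hy
    push_cast
    field_simp
    linear_combination h
  have hcont : ContinuousOn (fun z => B z - phi z ^ 4) (Icc 0 1) :=
    fun y hy => ((hderiv y (icc_sub hy)).continuousAt).continuousWithinAt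
  have hconst := constant_of_has_deriv_right_zero hcont (fun y hy => by
    have h := hderiv y (icc_sub (Ico_subset_Icc_self hy))
    rw [hzero y (Ico_subset_Icc_self hy)] at h
    exact h.hasDerivWithinAt) x hx
  have h0 : B (0:ℝ) - phi 0 ^ 4 = 0 := by rw [B_zero, phi_zero]; ring
  have := hconst.trans h0
  linarith [this]

lemma phi_one : phi 1 = π / 6 := by
  have h := Real.arcsin_sin (x := π / 6) (by linarith [Real.pi_pos]) (by linarith [Real.pi_pos])
  rw [Real.sin_pi_div_six] at h
  rw [phi]
  norm_num [h]

lemma B_one : B 1 = (π / 6) ^ 4 := by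
  have h := B_eq (x := 1) ⟨by norm_num, le_rfl⟩
  rw [h, phi_one]

theorem sum_harmonic2_inv_central_binom :
    ∑' k : ℕ,
        (∑ j ∈ Finset.Icc 1 k, (1 : ℝ) / (j : ℝ) ^ 2) /
          ((k + 1 : ℝ) ^ 2 * (Nat.choose (2 * (k + 1)) (k + 1) : ℝ)) =
      Real.pi ^ 4 / 1944 := by
  have key : ∀ k : ℕ,
      (∑ j ∈ Finset.Icc 1 k, (1 : ℝ) / (j : ℝ) ^ 2) /
          ((k + 1 : ℝ) ^ 2 * (Nat.choose (2 * (k + 1)) (k + 1) : ℝ)) = 2 / 3 * fB k 1 := by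
    intro k
    rw [fB, bb_succ, one_pow, aa]
    have e : (Nat.centralBinom (k + 1) : ℝ) = (Nat.choose (2 * (k + 1)) (k + 1) : ℝ) := by
      rw [Nat.centralBinom]
    rw [e]
    simp only [hh]
    push_cast
    ring
  have h1 : (∑' k : ℕ,
      (∑ j ∈ Finset.Icc 1 k, (1 : ℝ) / (j : ℝ) ^ 2) /
        ((k + 1 : ℝ) ^ 2 * (Nat.choose (2 * (k + 1)) (k + 1) : ℝ)))
      = ∑' k : ℕ, 2 / 3 * fB k 1 := tsum_congr key
  rw [h1, tsum_mul_left]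
  have hB : (∑' k, fB k 1) = B 1 := rfl
  rw [hB, B_one]
  ring
end

section
/- For every real x with -1/4 < x < 1/4, \sum_{k=0}^\infty binom(2k,k) H_k x^k = (2/sqrt(1-4x)) * log((1 + sqrt(1-4x)) / (2 sqrt(1-4x))). -/
open Real MeasureTheory Set

noncomputable def cb (k : ℕ) : ℝ := (Nat.choose (2 * k) k : ℝ)

lemma cb_nonneg (k : ℕ) : 0 ≤ cb k := by unfold cb; positivity

lemma cb_le (k : ℕ) : cb k ≤ 4 ^ k := by
  have h1 : Nat.choose (2 * k) k ≤ Nat.choose (2 * k + 1) k :=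
    Nat.choose_le_choose k (Nat.le_succ _)
  have h2 := Nat.choose_middle_le_pow k
  unfold cb
  have : Nat.choose (2 * k) k ≤ 4 ^ k := h1.trans h2
  exact_mod_cast this

lemma cb_rec (k : ℕ) : ((k:ℝ) + 1) * cb (k + 1) = (4 * k + 2) * cb k := by
  have := Nat.succ_mul_centralBinom_succ k
  unfold cb
  have h : ((k + 1) * Nat.centralBinom (k + 1) : ℝ) = (2 * (2 * k + 1) * Nat.centralBinom k : ℝ) := by
    exact_mod_cast congrArg (Nat.cast : ℕ → ℝ) this
  unfold Nat.centralBinom at h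
  push_cast at h ⊢
  ring_nf at h ⊢
  linarith

lemma summable_cb {y : ℝ} (hy : |y| < 4⁻¹) : Summable (fun k => cb k * y ^ k) := by
  apply Summable.of_norm
  apply Summable.of_nonneg_of_le (fun k => norm_nonneg _) (fun k => ?_)
    (summable_geometric_of_lt_one (by positivity) (by linarith [abs_nonneg y] : 4 * |y| < 1))
  · calc ‖cb k * y ^ k‖ = cb k * |y| ^ k := by
          rw [norm_mul, Real.norm_eq_abs, abs_of_nonneg (cb_nonneg k), Real.norm_eq_abs, abs_pow]
    _ ≤ 4 ^ k * |y| ^ k := by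
          apply mul_le_mul_of_nonneg_right (cb_le k) (by positivity)
    _ = (4 * |y|) ^ k := by rw [mul_pow]

noncomputable def Gf (y : ℝ) : ℝ := ∑' k, cb k * y ^ k

noncomputable def Df (y : ℝ) : ℝ := ∑' k, cb k * ((k : ℝ) * y ^ (k - 1))

lemma hasDerivAt_Gf {y : ℝ} (hy : |y| < 4⁻¹) : HasDerivAt Gf (Df y) y := by
  set r : ℝ := (|y| + 4⁻¹) / 2 with hr
  have hr0 : 0 < r := by positivity
  have hyr : |y| < r := by rw [hr]; linarith
  have hr4 : r < 4⁻¹ := by rw [hr]; linarith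
  have hu : Summable (fun k : ℕ => cb k * ((k : ℝ) * r ^ (k - 1))) := by
    apply Summable.of_nonneg_of_le (fun k => mul_nonneg (cb_nonneg k) (by positivity)) (fun k => ?_)
      (((summable_pow_mul_geometric_of_norm_lt_one 1
        (by rw [Real.norm_eq_abs, abs_of_nonneg (by positivity)]; linarith : ‖4 * r‖ < 1)).mul_left r⁻¹))
    calc cb k * ((k : ℝ) * r ^ (k - 1)) ≤ 4 ^ k * ((k : ℝ) * r ^ (k - 1)) := by
          apply mul_le_mul_of_nonneg_right (cb_le k) (by positivity)
      _ ≤ r⁻¹ * ((k:ℝ) ^ 1 * (4 * r) ^ k) := by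
          rcases Nat.eq_zero_or_pos k with h | h
          · subst h; simp
          · rw [mul_pow, pow_one]
            have : r ^ (k - 1) = r ^ k / r := by
              rw [eq_div_iff hr0.ne', ← pow_succ, Nat.sub_add_cancel h]
            rw [this]
            field_simp
            ring_nf
            exact le_refl _
  apply hasDerivAt_tsum_of_isPreconnected hu (isOpen_Ioo (a := -r) (b := r))
    (convex_Ioo _ _).isPreconnected
    (fun k z _ => (hasDerivAt_pow k z).const_mul (cb k))
    (fun k z hz => ?_) (by constructor <;> [linarith; linarith] : (0:ℝ) ∈ Ioo (-r) r)
    (summable_cb (by norm_num))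
    (abs_lt.mp hyr |> fun h => ⟨h.1, h.2⟩)
  · rw [Real.norm_eq_abs, abs_mul, abs_of_nonneg (cb_nonneg k), abs_mul, abs_pow,
      Nat.abs_cast]
    apply mul_le_mul_of_nonneg_left _ (cb_nonneg k)
    apply mul_le_mul_of_nonneg_left _ (Nat.cast_nonneg k)
    exact pow_le_pow_left₀ (abs_nonneg z) (le_of_lt (abs_lt.mpr ⟨hz.1, hz.2⟩)) _

lemma summable_df {y : ℝ} (hy : |y| < 4⁻¹) :
    Summable (fun k : ℕ => cb k * ((k : ℝ) * y ^ (k - 1))) := by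
  set r : ℝ := (|y| + 4⁻¹) / 2 with hr
  have hr0 : 0 < r := by positivity
  have hyr : |y| < r := by rw [hr]; linarith
  have hr4 : r < 4⁻¹ := by rw [hr]; linarith
  apply Summable.of_norm
  apply Summable.of_nonneg_of_le (fun k => norm_nonneg _) (fun k => ?_)
    (((summable_pow_mul_geometric_of_norm_lt_one 1
      (by rw [Real.norm_eq_abs, abs_of_nonneg (by positivity)]; linarith : ‖4 * r‖ < 1)).mul_left r⁻¹))
  rw [Real.norm_eq_abs, abs_mul, abs_of_nonneg (cb_nonneg k), abs_mul, abs_pow, Nat.abs_cast]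
  calc cb k * ((k:ℝ) * |y| ^ (k-1)) ≤ 4 ^ k * ((k : ℝ) * r ^ (k - 1)) := by
        apply mul_le_mul (cb_le k) _ (by positivity) (by positivity)
        exact mul_le_mul_of_nonneg_left
          (pow_le_pow_left₀ (abs_nonneg y) hyr.le _) (Nat.cast_nonneg k)
    _ ≤ r⁻¹ * ((k:ℝ) ^ 1 * (4 * r) ^ k) := by
        rcases Nat.eq_zero_or_pos k with h | h
        · subst h; simp
        · rw [mul_pow, pow_one]
          have : r ^ (k - 1) = r ^ k / r := by
            rw [eq_div_iff hr0.ne', ← pow_succ, Nat.sub_add_cancel h]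
          rw [this]
          field_simp
          ring_nf
          exact le_refl _

lemma ode_rel {y : ℝ} (hy : |y| < 4⁻¹) : (1 - 4 * y) * Df y = 2 * Gf y := by
  have hD : HasSum (fun k : ℕ => cb k * ((k : ℝ) * y ^ (k - 1))) (Df y) :=
    (summable_df hy).hasSum
  have hG : HasSum (fun k : ℕ => cb k * y ^ k) (Gf y) := (summable_cb hy).hasSum
  -- shift: HasSum (fun k => cb (k+1) * (k+1) * y^k) (Df y)
  have h0 : cb 0 * ((0 : ℝ) * y ^ (0 - 1)) = 0 := by simp
  have hD1 : HasSum (fun k : ℕ => cb (k + 1) * (((k : ℝ) + 1) * y ^ k)) (Df y) := by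
    have h := (hasSum_nat_add_iff' 1).mpr hD
    simp only [Finset.range_one, Finset.sum_singleton, Nat.cast_zero, zero_mul, mul_zero,
      sub_zero, Nat.cast_add, Nat.cast_one, Nat.add_sub_cancel] at h
    exact h
  -- y * Df y = ∑ cb k * k * y ^ k
  have hyD : HasSum (fun k : ℕ => cb k * ((k : ℝ) * y ^ k)) (Df y * y) := by
    have := hD.mul_right y
    convert this using 1
    · rfl
    funext k
    rcases Nat.eq_zero_or_pos k with h | h
    · subst h; simp
    · have : y ^ (k - 1) * y = y ^ k := by
        rw [← pow_succ, Nat.sub_add_cancel h]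
      rw [← this]; ring
  -- rewrite hD1 using recurrence
  have hD2 : HasSum (fun k : ℕ => (4 * (k:ℝ) + 2) * (cb k * y ^ k)) (Df y) := by
    convert hD1 using 2 with k
    linear_combination (-(y ^ k)) * cb_rec k
  have h4 : HasSum (fun k : ℕ => (4 * (k:ℝ) + 2) * (cb k * y ^ k))
      (4 * (Df y * y) + 2 * Gf y) := by
    have := (hyD.mul_left 4).add (hG.mul_left 2)
    convert this using 1
    · rfl
    funext k
    ring
  have := hD2.unique h4
  linarith

lemma sqrt_pos_of (y : ℝ) (hy : |y| < 4⁻¹) : 0 < 1 - 4 * y := by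
  have := abs_lt.mp hy
  linarith [this.2]

lemma hasDerivAt_H {y : ℝ} (hy : |y| < 4⁻¹) :
    HasDerivAt (fun z => Gf z * Real.sqrt (1 - 4 * z)) 0 y := by
  have hpos := sqrt_pos_of y hy
  have hq : 0 < Real.sqrt (1 - 4 * y) := Real.sqrt_pos.mpr hpos
  have hinner : HasDerivAt (fun z : ℝ => 1 - 4 * z) (-4) y := by
    simpa using ((hasDerivAt_id y).const_mul (4:ℝ)).const_sub 1
  have hsq : HasDerivAt (fun z : ℝ => Real.sqrt (1 - 4 * z))
      (1 / (2 * Real.sqrt (1 - 4 * y)) * (-4)) y :=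
    (Real.hasDerivAt_sqrt hpos.ne').comp y hinner
  have hprod := (hasDerivAt_Gf hy).mul hsq
  refine hprod.congr_deriv ?_
  symm
  have hsq2 : Real.sqrt (1 - 4 * y) ^ 2 = 1 - 4 * y := Real.sq_sqrt hpos.le
  have hode := ode_rel hy
  field_simp
  linear_combination (-2 * Df y) * hsq2 - 2 * hode

lemma Gf_eq {y : ℝ} (hy : |y| < 4⁻¹) : Gf y = 1 / Real.sqrt (1 - 4 * y) := by
  have hpos := sqrt_pos_of y hy
  have hq : 0 < Real.sqrt (1 - 4 * y) := Real.sqrt_pos.mpr hpos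
  set s : Set ℝ := Ioo (-(4⁻¹)) 4⁻¹ with hs
  have hso : IsOpen s := isOpen_Ioo
  have hmem : ∀ z ∈ s, |z| < 4⁻¹ := fun z hz => abs_lt.mpr ⟨by linarith [hz.1], hz.2⟩
  have hH : ∀ z ∈ s, HasDerivAt (fun w => Gf w * Real.sqrt (1 - 4 * w)) 0 z :=
    fun z hz => hasDerivAt_H (hmem z hz)
  have hconst : Gf y * Real.sqrt (1 - 4 * y) = Gf 0 * Real.sqrt (1 - 4 * 0) := by
    apply (convex_Ioo _ _).is_const_of_fderivWithin_eq_zero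
      (fun z hz => ((hH z hz).differentiableAt).differentiableWithinAt)
      (fun z hz => ?_) (abs_lt.mp hy |> fun h => ⟨h.1, h.2⟩) (by constructor <;> norm_num)
    rw [fderivWithin_of_isOpen hso hz]
    have := (hH z hz).hasFDerivAt
    rw [this.fderiv]
    ext w
    simp
  have hG0 : Gf 0 = 1 := by
    unfold Gf
    rw [tsum_eq_single 0 (fun k hk => by simp [zero_pow hk])]
    simp [cb]
  rw [hG0] at hconst
  simp at hconst
  rw [eq_div_iff hq.ne']
  exact hconst

lemma hasSum_cb {y : ℝ} (hy : |y| < 4⁻¹) :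
    HasSum (fun k => cb k * y ^ k) (1 / Real.sqrt (1 - 4 * y)) := by
  have := (summable_cb hy).hasSum
  rwa [show (∑' k, cb k * y ^ k) = Gf y from rfl, Gf_eq hy] at this

lemma geom_eq {a t : ℝ} (ht : t ∈ Ioo (0:ℝ) 1) (k : ℕ) :
    (a ^ k - (a * t) ^ k) / (1 - t) = a ^ k * ∑ j ∈ Finset.range k, t ^ j := by
  have ht1 : (1:ℝ) - t ≠ 0 := by have := ht.2; intro h; linarith [h]
  have hg : (1 - t) * ∑ j ∈ Finset.range k, t ^ j = 1 - t ^ k := by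
    have := geom_sum_mul t k
    linarith [this]
  rw [mul_pow, div_eq_iff ht1]
  linear_combination (-(a ^ k)) * hg

lemma integral_aux (a : ℝ) (k : ℕ) :
    ∫ t in Ioo (0:ℝ) 1, (a ^ k - (a * t) ^ k) / (1 - t) =
      (∑ j ∈ Finset.Icc 1 k, (1:ℝ) / (j:ℝ)) * a ^ k := by
  rw [setIntegral_congr_fun measurableSet_Ioo (fun t ht => geom_eq ht k)]
  rw [← integral_Ioc_eq_integral_Ioo, ← intervalIntegral.integral_of_le zero_le_one]
  rw [intervalIntegral.integral_const_mul]
  rw [intervalIntegral.integral_finset_sum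
    (fun j _ => (intervalIntegral.intervalIntegrable_pow j))]
  have : ∀ j ∈ Finset.range k, (∫ t in (0:ℝ)..1, t ^ j) = 1 / ((j:ℝ) + 1) := by
    intro j _
    rw [integral_pow]
    simp
  rw [Finset.sum_congr rfl this]
  have hIcc : Finset.Icc 1 k = Finset.Ico 1 (k+1) := by
    rw [Finset.Ico_add_one_right_eq_Icc]
  rw [hIcc, Finset.sum_Ico_eq_sum_range]
  simp only [Nat.add_sub_cancel]
  rw [mul_comm]
  congr 1
  apply Finset.sum_congr rfl
  intro j _
  push_cast
  rw [add_comm]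

section main
variable {x : ℝ}

lemma hpos14 (hx : |x| < 4⁻¹) {t : ℝ} (ht : t ∈ Icc (0:ℝ) 1) : 0 < 1 - 4 * x * t := by
  have h := abs_lt.mp hx
  rcases le_or_gt 0 x with h0 | h0
  · nlinarith [ht.1, ht.2, h.2]
  · nlinarith [ht.1, ht.2, h.1]

lemma algebra_eq (hx : |x| < 4⁻¹) {t : ℝ} (ht : t ∈ Ioo (0:ℝ) 1) :
    (1 / Real.sqrt (1 - 4 * x) - 1 / Real.sqrt (1 - 4 * x * t)) / (1 - t) =
      4 * x / (Real.sqrt (1 - 4 * x) * Real.sqrt (1 - 4 * x * t) *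
        (Real.sqrt (1 - 4 * x * t) + Real.sqrt (1 - 4 * x))) := by
  have hsx : 0 < 1 - 4 * x := sqrt_pos_of x hx
  have hut : 0 < 1 - 4 * x * t := hpos14 hx ⟨ht.1.le, ht.2.le⟩
  set s := Real.sqrt (1 - 4 * x) with hsdef
  set u := Real.sqrt (1 - 4 * x * t) with hudef
  have hs0 : 0 < s := Real.sqrt_pos.mpr hsx
  have hu0 : 0 < u := Real.sqrt_pos.mpr hut
  have hs2 : s ^ 2 = 1 - 4 * x := Real.sq_sqrt hsx.le
  have hu2 : u ^ 2 = 1 - 4 * x * t := Real.sq_sqrt hut.le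
  have ht1 : (0:ℝ) < 1 - t := by linarith [ht.2]
  have hden : (0:ℝ) < s * u * (u + s) := by positivity
  rw [div_eq_div_iff ht1.ne' hden.ne']
  have key : (1 / s - 1 / u) * (s * u * (u + s)) = u ^ 2 - s ^ 2 := by
    field_simp
    ring
  rw [key, hu2, hs2]
  ring

lemma ftc_eval (hx : |x| < 4⁻¹) :
    ∫ t in Ioo (0:ℝ) 1, 4 * x / (Real.sqrt (1 - 4 * x) * Real.sqrt (1 - 4 * x * t) *
        (Real.sqrt (1 - 4 * x * t) + Real.sqrt (1 - 4 * x))) =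
      2 / Real.sqrt (1 - 4 * x) *
        Real.log ((1 + Real.sqrt (1 - 4 * x)) / (2 * Real.sqrt (1 - 4 * x))) := by
  have hsx : 0 < 1 - 4 * x := sqrt_pos_of x hx
  set s := Real.sqrt (1 - 4 * x) with hsdef
  have hs0 : 0 < s := Real.sqrt_pos.mpr hsx
  set g : ℝ → ℝ := fun t => 4 * x / (s * Real.sqrt (1 - 4 * x * t) *
    (Real.sqrt (1 - 4 * x * t) + s)) with hgdef
  set Φ : ℝ → ℝ := fun t => -(2 / s) * Real.log (Real.sqrt (1 - 4 * x * t) + s) with hPhi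
  have hu : Continuous (fun t : ℝ => Real.sqrt (1 - 4 * x * t)) :=
    Real.continuous_sqrt.comp (by continuity)
  have hderiv : ∀ t ∈ uIcc (0:ℝ) 1, HasDerivAt Φ (g t) t := by
    intro t ht
    rw [uIcc_of_le zero_le_one] at ht
    have hut : 0 < 1 - 4 * x * t := hpos14 hx ht
    have hu0 : 0 < Real.sqrt (1 - 4 * x * t) := Real.sqrt_pos.mpr hut
    have hlin : HasDerivAt (fun t : ℝ => 1 - 4 * x * t) (-(4 * x)) t := by
      simpa using ((hasDerivAt_id t).const_mul (4 * x)).const_sub 1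
    have hsq : HasDerivAt (fun t : ℝ => Real.sqrt (1 - 4 * x * t))
        (1 / (2 * Real.sqrt (1 - 4 * x * t)) * (-(4 * x))) t :=
      (Real.hasDerivAt_sqrt hut.ne').comp t hlin
    have hw := hsq.add_const s
    have hlog := (hw.log (by positivity)).const_mul (-(2 / s))
    refine hlog.congr_deriv ?_
    symm
    rw [hgdef]
    set u := Real.sqrt (1 - 4 * x * t)
    field_simp
    ring
  have hcont : ContinuousOn g (uIcc (0:ℝ) 1) := by
    apply ContinuousOn.div continuousOn_const
    · exact ((continuous_const.mul hu).mul (hu.add continuous_const)).continuousOn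
    · intro t ht
      rw [uIcc_of_le zero_le_one] at ht
      have hut : 0 < 1 - 4 * x * t := hpos14 hx ht
      have hu0 : 0 < Real.sqrt (1 - 4 * x * t) := Real.sqrt_pos.mpr hut
      positivity
  have hint : IntervalIntegrable g MeasureTheory.volume 0 1 := hcont.intervalIntegrable
  have := intervalIntegral.integral_eq_sub_of_hasDerivAt hderiv hint
  rw [← integral_Ioc_eq_integral_Ioo, ← intervalIntegral.integral_of_le zero_le_one]
  rw [hgdef] at this
  rw [this, hPhi]
  simp only []
  have h1 : Real.sqrt (1 - 4 * x * 1) = s := by norm_num [hsdef]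
  have h0 : Real.sqrt (1 - 4 * x * 0) = 1 := by norm_num
  rw [h1, h0]
  have hlog : Real.log ((1 + s) / (2 * s)) = Real.log (1 + s) - Real.log (2 * s) :=
    Real.log_div (by positivity) (by positivity)
  rw [hlog]
  have : s + s = 2 * s := by ring
  rw [this]
  field_simp
  ring

end main

theorem boyadzhiev (x : ℝ) (hx1 : -(1/4) < x) (hx2 : x < 1/4) :
    ∑' k : ℕ,
        (Nat.choose (2 * k) k : ℝ) * (∑ j ∈ Finset.Icc 1 k, (1 : ℝ) / (j : ℝ)) * x ^ k =
      2 / Real.sqrt (1 - 4 * x) *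
        Real.log ((1 + Real.sqrt (1 - 4 * x)) / (2 * Real.sqrt (1 - 4 * x))) := by
  have hx : |x| < 4⁻¹ := abs_lt.mpr ⟨by linarith, by linarith⟩
  have hsx : 0 < 1 - 4 * x := sqrt_pos_of x hx
  set f : ℕ → ℝ → ℝ := fun k t => cb k * ((x ^ k - (x * t) ^ k) / (1 - t)) with hf
  -- measurability
  have hmeas : ∀ k, AEStronglyMeasurable (f k)
      (MeasureTheory.volume.restrict (Ioo (0:ℝ) 1)) := by
    intro k
    apply Measurable.aestronglyMeasurable
    apply Measurable.const_mul
    exact ((continuous_const.sub ((continuous_const.mul continuous_id).pow k)).measurable).div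
      ((continuous_const.sub continuous_id).measurable)
  -- integrability of each |f k| on Ioo 0 1
  have hpoly : ∀ k, IntegrableOn (f k) (Ioo (0:ℝ) 1) := by
    intro k
    have hcont : Continuous (fun t : ℝ => cb k * (x ^ k * ∑ j ∈ Finset.range k, t ^ j)) := by
      continuity
    have h1 : IntegrableOn (fun t : ℝ => cb k * (x ^ k * ∑ j ∈ Finset.range k, t ^ j))
        (Ioo (0:ℝ) 1) :=
      (hcont.integrableOn_Icc (a := 0) (b := 1)).mono_set Ioo_subset_Icc_self
    exact h1.congr_fun (fun t ht => by rw [hf]; simp only []; rw [geom_eq ht k])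
      measurableSet_Ioo |>.congr_fun (fun t ht => rfl) measurableSet_Ioo
  -- pointwise abs identity
  have habs : ∀ k, EqOn (fun t => ‖f k t‖)
      (fun t => cb k * ((|x| ^ k - (|x| * t) ^ k) / (1 - t))) (Ioo (0:ℝ) 1) := by
    intro k t ht
    have ht1 : (0:ℝ) < 1 - t := by linarith [ht.2]
    have htk : t ^ k ≤ 1 := pow_le_one₀ ht.1.le ht.2.le
    simp only [hf, Real.norm_eq_abs]
    rw [abs_mul, abs_of_nonneg (cb_nonneg k), abs_div, abs_of_pos ht1]
    congr 1
    rw [mul_pow, mul_pow, show x ^ k - x ^ k * t ^ k = x ^ k * (1 - t ^ k) by ring,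
      abs_mul, abs_pow, abs_of_nonneg (by linarith : (0:ℝ) ≤ 1 - t ^ k)]
    ring
  -- lintegral value
  have hlint : ∀ k, ∫⁻ t in Ioo (0:ℝ) 1, ‖f k t‖₊ =
      ENNReal.ofReal (cb k * ((∑ j ∈ Finset.Icc 1 k, (1:ℝ) / (j:ℝ)) * |x| ^ k)) := by
    intro k
    have hint : MeasureTheory.Integrable (fun t => ‖f k t‖)
        (MeasureTheory.volume.restrict (Ioo (0:ℝ) 1)) := (hpoly k).norm
    rw [show (fun t => (‖f k t‖₊ : ENNReal)) = fun t => ENNReal.ofReal ‖f k t‖ by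
      funext t; exact (ofReal_norm _).symm]
    rw [← MeasureTheory.ofReal_integral_eq_lintegral_ofReal hint
      (Filter.Eventually.of_forall fun t => norm_nonneg _)]
    congr 1
    rw [setIntegral_congr_fun measurableSet_Ioo (habs k),
      MeasureTheory.integral_const_mul, integral_aux |x| k]
  -- summability of the bound
  have hB : Summable (fun k => cb k * ((∑ j ∈ Finset.Icc 1 k, (1:ℝ) / (j:ℝ)) * |x| ^ k)) := by
    have h4x : ‖4 * |x|‖ < 1 := by
      rw [Real.norm_eq_abs, abs_of_nonneg (by positivity)]; linarith [abs_nonneg x]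
    apply Summable.of_nonneg_of_le (fun k => mul_nonneg (cb_nonneg k)
      (mul_nonneg (Finset.sum_nonneg fun j _ => by positivity) (by positivity)))
      (fun k => ?_) (summable_pow_mul_geometric_of_norm_lt_one 1 h4x)
    have hH : (∑ j ∈ Finset.Icc 1 k, (1:ℝ) / (j:ℝ)) ≤ (k:ℝ) := by
      calc (∑ j ∈ Finset.Icc 1 k, (1:ℝ) / (j:ℝ)) ≤ ∑ j ∈ Finset.Icc 1 k, (1:ℝ) := by
            apply Finset.sum_le_sum
            intro j hj
            have hj1 : 1 ≤ j := (Finset.mem_Icc.mp hj).1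
            rw [div_le_one (by exact_mod_cast hj1.trans_lt' Nat.zero_lt_one : (0:ℝ) < j)]
            exact_mod_cast hj1
        _ = (k:ℝ) := by
            rw [Finset.sum_const, Nat.card_Icc]
            simp
    calc cb k * ((∑ j ∈ Finset.Icc 1 k, (1:ℝ) / (j:ℝ)) * |x| ^ k)
        ≤ 4 ^ k * ((k:ℝ) * |x| ^ k) := by
          apply mul_le_mul (cb_le k) _ (mul_nonneg (Finset.sum_nonneg fun j _ => by positivity)
            (by positivity)) (by positivity)
          exact mul_le_mul_of_nonneg_right hH (by positivity)
      _ = (k:ℝ) ^ 1 * (4 * |x|) ^ k := by rw [mul_pow, pow_one]; ring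
  have hnonneg : ∀ k, 0 ≤ cb k * ((∑ j ∈ Finset.Icc 1 k, (1:ℝ) / (j:ℝ)) * |x| ^ k) :=
    fun k => mul_nonneg (cb_nonneg k)
      (mul_nonneg (Finset.sum_nonneg fun j _ => by positivity) (by positivity))
  have hne : ∑' k, ∫⁻ t in Ioo (0:ℝ) 1, ‖f k t‖₊ ≠ ⊤ := by
    rw [tsum_congr hlint, ← ENNReal.ofReal_tsum_of_nonneg hnonneg hB]
    exact ENNReal.ofReal_ne_top
  have hswap := MeasureTheory.integral_tsum hmeas hne
  have hIk : ∀ k, ∫ t in Ioo (0:ℝ) 1, f k t =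
      cb k * ((∑ j ∈ Finset.Icc 1 k, (1:ℝ) / (j:ℝ)) * x ^ k) := by
    intro k
    rw [hf]
    simp only []
    rw [MeasureTheory.integral_const_mul, integral_aux x k]
  have hpt : ∀ t ∈ Ioo (0:ℝ) 1, ∑' k, f k t =
      (1 / Real.sqrt (1 - 4 * x) - 1 / Real.sqrt (1 - 4 * (x * t))) / (1 - t) := by
    intro t ht
    have hxt : |x * t| < 4⁻¹ := by
      rw [abs_mul, abs_of_pos ht.1]
      calc |x| * t ≤ |x| * 1 := mul_le_mul_of_nonneg_left ht.2.le (abs_nonneg x)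
        _ = |x| := mul_one _
        _ < 4⁻¹ := hx
    have h3 := ((hasSum_cb hx).sub (hasSum_cb hxt)).div_const (1 - t)
    rw [← h3.tsum_eq]
    apply tsum_congr
    intro k
    rw [hf]
    simp only []
    ring
  calc ∑' k : ℕ, (Nat.choose (2 * k) k : ℝ) * (∑ j ∈ Finset.Icc 1 k, (1:ℝ) / (j:ℝ)) * x ^ k
      = ∑' k, ∫ t in Ioo (0:ℝ) 1, f k t := by
        apply tsum_congr
        intro k
        rw [hIk k, cb]
        ring
    _ = ∫ t in Ioo (0:ℝ) 1, ∑' k, f k t := hswap.symm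
    _ = ∫ t in Ioo (0:ℝ) 1, 4 * x / (Real.sqrt (1 - 4 * x) * Real.sqrt (1 - 4 * x * t) *
          (Real.sqrt (1 - 4 * x * t) + Real.sqrt (1 - 4 * x))) := by
        apply setIntegral_congr_fun measurableSet_Ioo
        intro t ht
        simp only []
        rw [hpt t ht, show 4 * (x * t) = 4 * x * t by ring]
        exact algebra_eq hx ht
    _ = 2 / Real.sqrt (1 - 4 * x) *
          Real.log ((1 + Real.sqrt (1 - 4 * x)) / (2 * Real.sqrt (1 - 4 * x))) := ftc_eval hx
end
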